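/- arXiv:1004.0479 — 8 statements merged into one kernel-verified Lean document; each statement's English description precedes it below -/
import Mathlib

section
/- Let μ_max be a nonnegative real number, and let Q, A, μ : ℕ → ℝ be sequences satisfying, for every t ∈ ℕ: Q(t+1) = Q(t) − μ(t) + A(t), 0 ≤ μ(t) ≤ μ_max, A(t) ≥ 0, and μ(t) = 0 whenever Q(t) < 2·μ_max. If Q(0) ≥ μ_max, then Q(t) ≥ μ_max for all t ∈ ℕ. -/
/-- Inventory lower bound lemma (sample-path, single queue): if consumption is capped by
`μmax`, consumption is zero whenever the queue is below `2·μmax`, and purchases are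
nonnegative, then the queue never falls below `μmax` if it starts at or above that level. -/
theorem inventory_lower_bound
    (μmax : ℝ) (hμmax : 0 ≤ μmax)
    (Q A μ : ℕ → ℝ)
    (hdyn : ∀ t, Q (t + 1) = Q t - μ t + A t)
    (hμ : ∀ t, 0 ≤ μ t ∧ μ t ≤ μmax)
    (hA : ∀ t, 0 ≤ A t)
    (hstop : ∀ t, Q t < 2 * μmax → μ t = 0)
    (h0 : Q 0 ≥ μmax) :
    ∀ t, Q t ≥ μmax := by
  intro t
  induction t with
  | zero => exact h0
  | succ n ih =>
    rw [hdyn n]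
    rcases lt_or_ge (Q n) (2 * μmax) with h | h
    · have := hstop n h
      have := hA n
      linarith
    · have := (hμ n).2
      have := hA n
      linarith
end

section
/- Let M be a finite nonempty index set and fix m ∈ M. Let V ≥ 0, α ∈ ℝ, P ∈ ℝ, P_max ∈ ℝ, F ≥ 0 and μ_max ≥ 0 be real numbers with P ≤ P_max. Let β : M → ℝ satisfy β(i) ≥ 0 for all i and β(m) > 0, and let Q, θ, A_max : M → ℝ satisfy Q(i) − θ(i) ≤ A_max(i) for all i ≠ m and Q(m) ≤ 2·μ_max. If θ(m) ≥ V·(P_max − α)/β(m) + (Σ_{i ≠ m} β(i)·A_max(i))/β(m) + 2·μ_max, then V·(P − α)·F + F·Σ_{i ∈ M} β(i)·(Q(i) − θ(i)) ≤ 0. -/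
/-- Key inequality in the proof of the inventory lower bound lemma for JPP: the pricing
objective functional is nonpositive when queue `m` is below `2·μmax` and the threshold
`θ m` is chosen large enough. -/
theorem pricing_objective_nonpos
    {M : Type*} [Fintype M] [DecidableEq M] [Nonempty M] (m : M)
    (V α P Pmax F μmax : ℝ)
    (hV : 0 ≤ V) (hF : 0 ≤ F) (hμmax : 0 ≤ μmax) (hP : P ≤ Pmax)
    (β Q θ Amax : M → ℝ)
    (hβ : ∀ i, 0 ≤ β i) (hβm : 0 < β m)
    (hQA : ∀ i, i ≠ m → Q i - θ i ≤ Amax i)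
    (hQm : Q m ≤ 2 * μmax)
    (hθm : θ m ≥ V * (Pmax - α) / β m
      + (∑ i ∈ Finset.univ.erase m, β i * Amax i) / β m + 2 * μmax) :
    V * (P - α) * F + F * ∑ i, β i * (Q i - θ i) ≤ 0 := by
  have key : V * (P - α) + ∑ i, β i * (Q i - θ i) ≤ 0 := by
    have hsplit : ∑ i, β i * (Q i - θ i)
        = β m * (Q m - θ m) + ∑ i ∈ Finset.univ.erase m, β i * (Q i - θ i) := by
      rw [← Finset.add_sum_erase _ _ (Finset.mem_univ m)]
    have hrest : ∑ i ∈ Finset.univ.erase m, β i * (Q i - θ i)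
        ≤ ∑ i ∈ Finset.univ.erase m, β i * Amax i := by
      apply Finset.sum_le_sum
      intro i hi
      exact mul_le_mul_of_nonneg_left (hQA i (Finset.ne_of_mem_erase hi)) (hβ i)
    have hθ' : β m * θ m ≥ V * (Pmax - α) + (∑ i ∈ Finset.univ.erase m, β i * Amax i)
        + β m * (2 * μmax) := by
      have := mul_le_mul_of_nonneg_left hθm (le_of_lt hβm)
      rw [mul_add, mul_add, mul_div_cancel₀ _ (ne_of_gt hβm),
        mul_div_cancel₀ _ (ne_of_gt hβm)] at this
      linarith
    have hQm' : β m * Q m ≤ β m * (2 * μmax) :=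
      mul_le_mul_of_nonneg_left hQm (le_of_lt hβm)
    have hVP : V * (P - α) ≤ V * (Pmax - α) :=
      mul_le_mul_of_nonneg_left (by linarith) hV
    rw [hsplit]
    nlinarith [hrest, hθ', hQm', hVP]
  calc V * (P - α) * F + F * ∑ i, β i * (Q i - θ i)
      = F * (V * (P - α) + ∑ i, β i * (Q i - θ i)) := by ring
    _ ≤ 0 := mul_nonpos_of_nonneg_of_nonpos hF key
end

section
/- Let c ≥ 0 and θ be real numbers, let t₀ and T be natural numbers, and let Q, x : ℕ → ℝ be sequences with |Q(τ+1) − Q(τ)| ≤ c and |x(τ)| ≤ c for all τ ∈ ℕ. Then Σ_{τ=t₀}^{t₀+T−1} (Q(τ) − θ)·x(τ) ≤ (T·(T−1)/2)·c² + (Q(t₀) − θ)·Σ_{τ=t₀}^{t₀+T−1} x(τ). -/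
lemma Q_drift_bound (c : ℝ) (Q : ℕ → ℝ) (hQ : ∀ τ, |Q (τ + 1) - Q τ| ≤ c)
    (t₀ : ℕ) : ∀ k : ℕ, |Q (t₀ + k) - Q t₀| ≤ (k : ℝ) * c := by
  intro k
  induction k with
  | zero => simp
  | succ n ih =>
      have h1 := hQ (t₀ + n)
      have : Q (t₀ + (n + 1)) - Q t₀ = (Q (t₀ + n + 1) - Q (t₀ + n)) + (Q (t₀ + n) - Q t₀) := by
        have h : t₀ + (n + 1) = t₀ + n + 1 := by omega
        rw [h]; ring
      rw [this]
      calc |(Q (t₀ + n + 1) - Q (t₀ + n)) + (Q (t₀ + n) - Q t₀)|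
          ≤ |Q (t₀ + n + 1) - Q (t₀ + n)| + |Q (t₀ + n) - Q t₀| := abs_add_le _ _
        _ ≤ c + (n : ℝ) * c := add_le_add h1 ih
        _ = ((n + 1 : ℕ) : ℝ) * c := by push_cast; ring

/-- Sample-path rearrangement step in the T-slot drift lemma: the time-varying weight
`Q τ − θ` may be replaced by its value at the start of the frame at cost
`(T(T−1)/2)·c²`. -/
theorem freeze_queue_weight
    (c θ : ℝ) (hc : 0 ≤ c) (t₀ T : ℕ)
    (Q x : ℕ → ℝ)
    (hQ : ∀ τ, |Q (τ + 1) - Q τ| ≤ c)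
    (hx : ∀ τ, |x τ| ≤ c) :
    ∑ τ ∈ Finset.Ico t₀ (t₀ + T), (Q τ - θ) * x τ
      ≤ ((T : ℝ) * ((T : ℝ) - 1) / 2) * c ^ 2
        + (Q t₀ - θ) * ∑ τ ∈ Finset.Ico t₀ (t₀ + T), x τ := by
  have key : ∑ τ ∈ Finset.Ico t₀ (t₀ + T), ((Q τ - θ) * x τ - (Q t₀ - θ) * x τ)
      ≤ ∑ τ ∈ Finset.Ico t₀ (t₀ + T), ((τ - t₀ : ℕ) : ℝ) * c ^ 2 := by
    apply Finset.sum_le_sum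
    intro τ hτ
    rw [Finset.mem_Ico] at hτ
    have h1 : (Q τ - θ) * x τ - (Q t₀ - θ) * x τ = (Q τ - Q t₀) * x τ := by ring
    rw [h1]
    obtain ⟨k, hk⟩ : ∃ k, τ = t₀ + k := ⟨τ - t₀, by omega⟩
    subst hk
    calc (Q (t₀ + k) - Q t₀) * x (t₀ + k)
        ≤ |(Q (t₀ + k) - Q t₀) * x (t₀ + k)| := le_abs_self _
      _ = |Q (t₀ + k) - Q t₀| * |x (t₀ + k)| := abs_mul _ _
      _ ≤ ((k : ℝ) * c) * c := by
          apply mul_le_mul (Q_drift_bound c Q hQ t₀ k) (hx _) (abs_nonneg _)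
          positivity
      _ = ((t₀ + k - t₀ : ℕ) : ℝ) * c ^ 2 := by
          have : t₀ + k - t₀ = k := by omega
          rw [this]; ring
  have hsum : ∑ τ ∈ Finset.Ico t₀ (t₀ + T), ((τ - t₀ : ℕ) : ℝ) * c ^ 2
      = ((T : ℝ) * ((T : ℝ) - 1) / 2) * c ^ 2 := by
    rw [← Finset.sum_mul]
    congr 1
    rw [Finset.sum_Ico_eq_sum_range]
    simp only [Nat.add_sub_cancel_left, add_tsub_cancel_left]
    · clear key
      induction T with
      | zero => simp
      | succ n ih =>
          rw [Finset.sum_range_succ, ih]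
          push_cast
          ring
  rw [Finset.sum_sub_distrib, ← Finset.mul_sum] at key
  linarith [key, hsum ▸ key]
end

section
/- Let S be a nonempty compact subset of ℝ × ℝ, and let x be a point in the topological frontier of the convex hull of S. Then there exist points p, q ∈ S and a real number t ∈ [0,1] such that x = t·p + (1−t)·q. -/
open Set Finset Module

/-- The convex hull of a compact set in `ℝ²` is compact. -/
lemma isCompact_convexHull_aux {S : Set (ℝ × ℝ)} (hS : IsCompact S) :
    IsCompact (convexHull ℝ S) := by
  classical
  set g : (Fin 3 → ℝ) × (Fin 3 → ℝ × ℝ) → ℝ × ℝ := fun p => ∑ i, p.1 i • p.2 i with hg_def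
  have hg : Continuous g := by
    apply continuous_finset_sum
    intro i _
    exact ((continuous_apply i).comp continuous_fst).smul
      ((continuous_apply i).comp continuous_snd)
  have hK : IsCompact ((stdSimplex ℝ (Fin 3)) ×ˢ (Set.univ.pi fun _ : Fin 3 => S)) :=
    (isCompact_stdSimplex _ _).prod (isCompact_univ_pi fun _ => hS)
  have himg : convexHull ℝ S
      = g '' ((stdSimplex ℝ (Fin 3)) ×ˢ (Set.univ.pi fun _ : Fin 3 => S)) := by
    apply Set.Subset.antisymm
    · intro x hx
      obtain ⟨ι, hι, z, w, hzS, hai, hw0, hw1, hx⟩ := eq_pos_convex_span_of_mem_convexHull hx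
      have hne' : Nonempty ι := by
        by_contra h
        rw [not_nonempty_iff] at h
        rw [Finset.univ_eq_empty, Finset.sum_empty] at hw1
        exact one_ne_zero hw1.symm
      have hcard : Fintype.card ι ≤ 3 := by
        have h1 : Fintype.card ι = (Fintype.card ι - 1) + 1 :=
          (Nat.succ_pred_eq_of_pos Fintype.card_pos).symm
        have h2 := hai.finrank_vectorSpan h1
        have h3 : finrank ℝ (vectorSpan ℝ (Set.range z)) ≤ finrank ℝ (ℝ × ℝ) :=
          Submodule.finrank_le _
        have h4 : finrank ℝ (ℝ × ℝ) = 2 := by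
          simp [finrank_prod]
        rw [h2, h4] at h3
        omega
      have hcard' : Fintype.card ι ≤ Fintype.card (Fin 3) := by simpa using hcard
      obtain ⟨e⟩ := Function.Embedding.nonempty_of_card_le hcard'
      obtain ⟨i₀⟩ := hne'
      set w' : Fin 3 → ℝ := fun j => ∑ i ∈ Finset.univ.filter (fun i => e i = j), w i with hw'
      set z' : Fin 3 → ℝ × ℝ := fun j => if h : ∃ i, e i = j then z h.choose else z i₀ with hz'
      have hz'e : ∀ i : ι, z' (e i) = z i := by
        intro i
        have h : ∃ i', e i' = e i := ⟨i, rfl⟩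
        have := h.choose_spec
        have heq : h.choose = i := e.injective this
        simp only [hz', dif_pos h, heq]
      refine ⟨(w', z'), ⟨⟨fun j => Finset.sum_nonneg fun i _ => (hw0 i).le, ?_⟩, ?_⟩, ?_⟩
      · rw [show ∑ j, w' j = ∑ j : Fin 3, ∑ i ∈ Finset.univ.filter (fun i => e i = j), w i
          from rfl]
        rw [Finset.sum_fiberwise]
        exact hw1
      · intro j _
        simp only [hz']
        split
        · exact hzS ⟨_, rfl⟩
        · exact hzS ⟨_, rfl⟩
      · show ∑ j, w' j • z' j = x
        rw [← hx, ← Finset.sum_fiberwise Finset.univ (fun i => e i) (fun i => w i • z i)]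
        refine Finset.sum_congr rfl fun j _ => ?_
        rw [hw', Finset.sum_smul]
        refine Finset.sum_congr rfl fun i hi => ?_
        rw [Finset.mem_filter] at hi
        rw [← hi.2, hz'e]
    · rintro y ⟨⟨w, z⟩, ⟨hw, hz⟩, rfl⟩
      exact mem_convexHull_of_exists_fintype w z hw.1 hw.2
        (fun i => hz i (Set.mem_univ i)) rfl
  rw [himg]
  exact hK.image hg

/-- If the affine span of `s ⊆ ℝ²` is not everything, then every point of the convex hull
is a combination of at most two points. -/
lemma two_points_of_affineSpan_ne_top {s : Set (ℝ × ℝ)} {x : ℝ × ℝ}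
    (hx : x ∈ convexHull ℝ s) (hspan : affineSpan ℝ s ≠ ⊤) :
    ∃ p ∈ s, ∃ q ∈ s, ∃ t : ℝ, t ∈ Set.Icc (0 : ℝ) 1 ∧ x = t • p + (1 - t) • q := by
  classical
  rw [convexHull_eq_union] at hx
  simp only [Set.mem_iUnion, exists_prop] at hx
  obtain ⟨T, hTs, hai, hxT⟩ := hx
  have hTne : T.Nonempty := by
    rcases T.eq_empty_or_nonempty with rfl | h
    · simp at hxT
    · exact h
  have hsne : s.Nonempty := ⟨hTne.choose, hTs hTne.choose_spec⟩
  have hdir : vectorSpan ℝ s ≠ ⊤ := by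
    intro h
    apply hspan
    have h2 : (affineSpan ℝ s).direction = ⊤ := by rw [direction_affineSpan]; exact h
    exact (AffineSubspace.direction_eq_top_iff_of_nonempty
      ((affineSpan_nonempty ℝ).mpr hsne)).mp h2
  have hfr : finrank ℝ (vectorSpan ℝ s) ≤ 1 := by
    have h1 : finrank ℝ (vectorSpan ℝ s) < finrank ℝ (ℝ × ℝ) := Submodule.finrank_lt hdir
    have h2 : finrank ℝ (ℝ × ℝ) = 2 := by simp [finrank_prod]
    omega
  have hfrT : finrank ℝ (vectorSpan ℝ (↑T : Set (ℝ × ℝ))) ≤ 1 :=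
    le_trans (Submodule.finrank_mono (vectorSpan_mono ℝ hTs)) hfr
  have hcard : T.card ≤ 2 := by
    have hpos : 0 < T.card := hTne.card_pos
    have h1 : Fintype.card ↥T = (T.card - 1) + 1 := by
      rw [Fintype.card_coe]; omega
    have h2 := hai.finrank_vectorSpan h1
    have h3 : Set.range ((↑) : ↥T → ℝ × ℝ) = (↑T : Set (ℝ × ℝ)) := Subtype.range_coe
    rw [h3] at h2
    rw [h2] at hfrT
    omega
  have hpos : 0 < T.card := hTne.card_pos
  interval_cases h : T.card
  · -- card = 1
    obtain ⟨a, rfl⟩ := Finset.card_eq_one.mp h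
    have ha : a ∈ s := hTs (Finset.mem_singleton_self a)
    rw [Finset.coe_singleton, convexHull_singleton, Set.mem_singleton_iff] at hxT
    refine ⟨a, ha, a, ha, 1, ⟨zero_le_one, le_refl 1⟩, ?_⟩
    rw [hxT]; simp
  · -- card = 2
    obtain ⟨a, b, hab, rfl⟩ := Finset.card_eq_two.mp h
    have ha : a ∈ s := hTs (by simp)
    have hb : b ∈ s := hTs (by simp)
    rw [Finset.coe_insert, Finset.coe_singleton, convexHull_pair] at hxT
    obtain ⟨u, v, hu, hv, huv, hxuv⟩ := hxT
    refine ⟨a, ha, b, hb, u, ⟨hu, by linarith⟩, ?_⟩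
    rw [← hxuv]
    congr 1
    rw [show (1 : ℝ) - u = v by linarith]

/-- For a nonempty compact set `S ⊆ ℝ²`, every point on the frontier of the convex hull
of `S` is a convex combination of at most two points of `S`. -/
theorem frontier_convexHull_two_points
    (S : Set (ℝ × ℝ)) (hSne : S.Nonempty) (hScomp : IsCompact S)
    (x : ℝ × ℝ) (hx : x ∈ frontier (convexHull ℝ S)) :
    ∃ p ∈ S, ∃ q ∈ S, ∃ t : ℝ, t ∈ Set.Icc (0 : ℝ) 1 ∧ x = t • p + (1 - t) • q := by
  classical
  have hconv : Convex ℝ (convexHull ℝ S) := convex_convexHull ℝ S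
  have hcomp : IsCompact (convexHull ℝ S) := isCompact_convexHull_aux hScomp
  have hclosed : IsClosed (convexHull ℝ S) := hcomp.isClosed
  have hxhull : x ∈ convexHull ℝ S := by
    have h1 : x ∈ closure (convexHull ℝ S) := frontier_subset_closure hx
    rwa [hclosed.closure_eq] at h1
  have hxint : x ∉ interior (convexHull ℝ S) := by
    rw [frontier] at hx
    exact hx.2
  by_cases hspan : affineSpan ℝ S = ⊤
  · -- full-dimensional case: supporting hyperplane
    have hint : (interior (convexHull ℝ S)).Nonempty := by
      rw [hconv.interior_nonempty_iff_affineSpan_eq_top, affineSpan_convexHull]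
      exact hspan
    obtain ⟨f, hf⟩ := geometric_hahn_banach_open_point hconv.interior isOpen_interior hxint
    obtain ⟨a, ha⟩ := hint
    have hle : ∀ y ∈ convexHull ℝ S, f y ≤ f x := by
      intro y hy
      have key : ∀ t : ℝ, t ∈ Set.Ioc (0 : ℝ) 1 → f (y + t • (a - y)) ≤ f x := fun t ht =>
        (hf _ (hconv.add_smul_sub_mem_interior hy ha ht)).le
      have hc : Continuous fun t : ℝ => f (y + t • (a - y)) :=
        f.continuous.comp (continuous_const.add (continuous_id.smul continuous_const))
      have hten : Filter.Tendsto (fun t : ℝ => f (y + t • (a - y)))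
          (nhdsWithin 0 (Set.Ioi 0)) (nhds (f y)) := by
        have h0 : f (y + (0 : ℝ) • (a - y)) = f y := by simp
        have h2 : Filter.Tendsto (fun t : ℝ => f (y + t • (a - y)))
            (nhdsWithin 0 (Set.Ioi 0)) (nhds (f (y + (0 : ℝ) • (a - y)))) :=
          (hc.tendsto 0).mono_left nhdsWithin_le_nhds
        rwa [h0] at h2
      refine le_of_tendsto hten ?_
      filter_upwards [Ioc_mem_nhdsGT_of_mem (Set.left_mem_Ico.mpr zero_lt_one)] with t ht
      exact key t ht
    set T : Set (ℝ × ℝ) := {y | y ∈ S ∧ f y = f x} with hT_def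
    obtain ⟨ι, hfin, w, z, hw0, hw1, hzS, hzx⟩ := mem_convexHull_iff_exists_fintype.mp hxhull
    have hfz : ∀ i, f (z i) ≤ f x := fun i => hle _ (subset_convexHull ℝ S (hzS i))
    have hsum : ∑ i, w i * f (z i) = f x := by
      have h1 : f (∑ i, w i • z i) = f x := congrArg f hzx
      rw [map_sum] at h1
      simpa [smul_eq_mul] using h1
    have hkey : ∀ i, w i ≠ 0 → f (z i) = f x := by
      by_contra hcon
      push_neg at hcon
      obtain ⟨i₀, hi₀w, hi₀f⟩ := hcon
      have hlt : ∑ i, w i * f (z i) < ∑ i, w i * f x := by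
        apply Finset.sum_lt_sum
        · intro i _
          exact mul_le_mul_of_nonneg_left (hfz i) (hw0 i)
        · refine ⟨i₀, Finset.mem_univ _, ?_⟩
          exact mul_lt_mul_of_pos_left (lt_of_le_of_ne (hfz i₀) hi₀f) ((hw0 i₀).lt_of_ne
            (Ne.symm hi₀w))
      rw [hsum, ← Finset.sum_mul, hw1, one_mul] at hlt
      exact lt_irrefl _ hlt
    have hxT : x ∈ convexHull ℝ T := by
      have h1 : ∑ i ∈ Finset.univ.filter (fun i => w i ≠ 0), w i = 1 := by
        rw [Finset.sum_filter_ne_zero]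
        exact hw1
      have h2 := Finset.centerMass_mem_convexHull (t := Finset.univ.filter (fun i => w i ≠ 0))
        (w := w) (z := z) (hw₀ := fun i hi => hw0 i)
        (hws := by rw [h1]; exact zero_lt_one)
        (hz := fun i hi => show z i ∈ T from ⟨hzS i, hkey i (Finset.mem_filter.mp hi).2⟩)
      rwa [Finset.centerMass_filter_ne_zero, Finset.centerMass_eq_of_sum_1 _ _ hw1, hzx] at h2
    have hTtop : affineSpan ℝ T ≠ ⊤ := by
      intro htop
      have h2 : vectorSpan ℝ T = ⊤ := by
        rw [← direction_affineSpan, htop]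
        exact AffineSubspace.direction_top ℝ _ _
      have h3 : vectorSpan ℝ T ≤ LinearMap.ker (f : (ℝ × ℝ) →ₗ[ℝ] ℝ) := by
        rw [vectorSpan_def]
        apply Submodule.span_le.mpr
        rintro v hv
        rw [Set.mem_vsub] at hv
        obtain ⟨y1, hy1, y2, hy2, rfl⟩ := hv
        rw [SetLike.mem_coe, LinearMap.mem_ker]
        show f (y1 -ᵥ y2) = 0
        rw [vsub_eq_sub, map_sub, hy1.2, hy2.2, sub_self]
      rw [h2, top_le_iff] at h3
      have h4 : (a - x) ∈ LinearMap.ker (f : (ℝ × ℝ) →ₗ[ℝ] ℝ) := h3 ▸ Submodule.mem_top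
      rw [LinearMap.mem_ker] at h4
      have h5 : f (a - x) = 0 := h4
      rw [map_sub, sub_eq_zero] at h5
      exact absurd h5 (ne_of_lt (hf a ha))
    obtain ⟨p, hp, q, hq, t, ht, hxt⟩ := two_points_of_affineSpan_ne_top hxT hTtop
    exact ⟨p, hp.1, q, hq.1, t, ht, hxt⟩
  · exact two_points_of_affineSpan_ne_top hxhull hspan
end

section
/- Let S be a nonempty compact subset of ℝ × ℝ and let (r, d) be a point of the convex hull of S. Then there exist points p, q ∈ S and a real number t ∈ [0,1] such that t·p₂ + (1−t)·q₂ = d and t·p₁ + (1−t)·q₁ ≥ r, where p = (p₁, p₂) and q = (q₁, q₂). -/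
/-- Core: sorted triangle, target height `d` at most `b.2`. -/
lemma tri_core1 (a b c : ℝ × ℝ) (β γ d r : ℝ) (hβ : 0 ≤ β) (hγ : 0 ≤ γ) (hβγ : β + γ ≤ 1)
    (hab : a.2 ≤ b.2) (hbc : b.2 ≤ c.2)
    (hdd : d = (1 - β - γ) * a.2 + β * b.2 + γ * c.2)
    (hrr : r = (1 - β - γ) * a.1 + β * b.1 + γ * c.1)
    (hd : d ≤ b.2) :
    ∃ p ∈ ({a, b, c} : Set (ℝ × ℝ)), ∃ q ∈ ({a, b, c} : Set (ℝ × ℝ)),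
      ∃ s ∈ Set.Icc (0 : ℝ) 1,
        s * p.2 + (1 - s) * q.2 = d ∧ s * p.1 + (1 - s) * q.1 ≥ r := by
  have had : a.2 ≤ d := by
    nlinarith [mul_nonneg hβ (sub_nonneg.2 hab), mul_nonneg hγ (sub_nonneg.2 (hab.trans hbc))]
  by_cases hba : b.2 ≤ a.2
  · -- degenerate: a.2 = b.2 = d
    have hab2 : a.2 = b.2 := le_antisymm hab hba
    have hda : d = a.2 := le_antisymm (by linarith) had
    have hγc : γ * (c.2 - d) = 0 := by
      linear_combination (1 - γ) * hda + β * hab2 - hdd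
    by_cases hab1 : b.1 ≤ a.1
    · refine ⟨a, by simp, c, by simp, 1 - γ, ⟨by linarith, by linarith⟩, ?_, ?_⟩
      · linear_combination hγc - (1 - γ) * hda
      · nlinarith [mul_nonneg hβ (sub_nonneg.2 hab1)]
    · push_neg at hab1
      refine ⟨b, by simp, c, by simp, 1 - γ, ⟨by linarith, by linarith⟩, ?_, ?_⟩
      · linear_combination hγc - (1 - γ) * hda - (1 - γ) * hab2
      · nlinarith [mul_nonneg (by linarith : (0:ℝ) ≤ 1 - β - γ) (sub_nonneg.2 hab1.le)]
  · push_neg at hba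
    have hac : a.2 < c.2 := lt_of_lt_of_le hba hbc
    have hb2 : (0:ℝ) < b.2 - a.2 := by linarith
    have hc2 : (0:ℝ) < c.2 - a.2 := by linarith
    obtain ⟨t1, ht1⟩ : ∃ x : ℝ, x = (b.2 - d) / (b.2 - a.2) := ⟨_, rfl⟩
    obtain ⟨t2, ht2⟩ : ∃ x : ℝ, x = (c.2 - d) / (c.2 - a.2) := ⟨_, rfl⟩
    have ht1m : t1 ∈ Set.Icc (0:ℝ) 1 := by
      rw [ht1]
      exact ⟨div_nonneg (by linarith) hb2.le, by rw [div_le_one hb2]; linarith⟩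
    have ht2m : t2 ∈ Set.Icc (0:ℝ) 1 := by
      rw [ht2]
      exact ⟨div_nonneg (by linarith) hc2.le, by rw [div_le_one hc2]; linarith⟩
    have heq1 : t1 * a.2 + (1 - t1) * b.2 = d := by
      rw [ht1]; field_simp; ring
    have heq2 : t2 * a.2 + (1 - t2) * c.2 = d := by
      rw [ht2]; field_simp; ring
    have key : r ≤ t1 * a.1 + (1 - t1) * b.1 ∨ r ≤ t2 * a.1 + (1 - t2) * c.1 := by
      by_contra h
      push_neg at h
      obtain ⟨h1, h2⟩ := h
      have hu1 : t1 * a.1 + (1 - t1) * b.1 = ((b.2 - d) * a.1 + (d - a.2) * b.1) / (b.2 - a.2) := by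
        rw [ht1]; field_simp; ring
      have hu2 : t2 * a.1 + (1 - t2) * c.1 = ((c.2 - d) * a.1 + (d - a.2) * c.1) / (c.2 - a.2) := by
        rw [ht2]; field_simp; ring
      rw [hu1] at h1
      rw [hu2] at h2
      have h1' : (b.2 - d) * a.1 + (d - a.2) * b.1 < r * (b.2 - a.2) :=
        (div_lt_iff₀ hb2).1 h1
      have h2' : (c.2 - d) * a.1 + (d - a.2) * c.1 < r * (c.2 - a.2) :=
        (div_lt_iff₀ hc2).1 h2
      obtain ⟨D, hD⟩ : ∃ x : ℝ, x = (b.2 - a.2) * c.1 + (c.2 - b.2) * a.1 - (c.2 - a.2) * b.1 :=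
        ⟨_, rfl⟩
      have hg : 0 < γ * D := by
        have expand : r * (b.2 - a.2) - ((b.2 - d) * a.1 + (d - a.2) * b.1) = γ * D := by
          rw [hD]; linear_combination (b.2 - a.2) * hrr + (a.1 - b.1) * hdd
        linarith
      have hb' : β * D < 0 := by
        have expand : r * (c.2 - a.2) - ((c.2 - d) * a.1 + (d - a.2) * c.1) = -(β * D) := by
          rw [hD]; linear_combination (c.2 - a.2) * hrr + (a.1 - c.1) * hdd
        linarith
      nlinarith [mul_pos hg (neg_pos.2 hb'), mul_nonneg hβ hγ, sq_nonneg D]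
    rcases key with hk | hk
    · exact ⟨a, by simp, b, by simp, t1, ht1m, heq1, hk⟩
    · exact ⟨a, by simp, c, by simp, t2, ht2m, heq2, hk⟩

/-- Sorted triangle, arbitrary target height. -/
lemma tri_core (a b c : ℝ × ℝ) (β γ d r : ℝ) (hβ : 0 ≤ β) (hγ : 0 ≤ γ) (hβγ : β + γ ≤ 1)
    (hab : a.2 ≤ b.2) (hbc : b.2 ≤ c.2)
    (hdd : d = (1 - β - γ) * a.2 + β * b.2 + γ * c.2)
    (hrr : r = (1 - β - γ) * a.1 + β * b.1 + γ * c.1) :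
    ∃ p ∈ ({a, b, c} : Set (ℝ × ℝ)), ∃ q ∈ ({a, b, c} : Set (ℝ × ℝ)),
      ∃ s ∈ Set.Icc (0 : ℝ) 1,
        s * p.2 + (1 - s) * q.2 = d ∧ s * p.1 + (1 - s) * q.1 ≥ r := by
  by_cases hd : d ≤ b.2
  · exact tri_core1 a b c β γ d r hβ hγ hβγ hab hbc hdd hrr hd
  · push_neg at hd
    obtain ⟨p', hp', q', hq', s, hs, h2, h1⟩ :=
      tri_core1 (c.1, -c.2) (b.1, -b.2) (a.1, -a.2) β (1 - β - γ) (-d) r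
        hβ (by linarith) (by linarith)
        (by dsimp only; linarith)
        (by dsimp only; linarith)
        (by dsimp only; linear_combination -hdd)
        (by dsimp only; linear_combination hrr)
        (by dsimp only; linarith)
    have mem : ∀ x : ℝ × ℝ, x ∈ ({(c.1, -c.2), (b.1, -b.2), (a.1, -a.2)} : Set (ℝ × ℝ)) →
        (x.1, -x.2) ∈ ({a, b, c} : Set (ℝ × ℝ)) := by
      intro x hx
      simp only [Set.mem_insert_iff, Set.mem_singleton_iff] at hx
      rcases hx with rfl | rfl | rfl <;> simp
    refine ⟨(p'.1, -p'.2), mem p' hp', (q'.1, -q'.2), mem q' hq', s, hs, ?_, ?_⟩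
    · dsimp only; linarith
    · dsimp only; exact h1

/-- Triangle lemma, arbitrary order. -/
lemma tri (a b c : ℝ × ℝ) (α β γ d r : ℝ) (hα : 0 ≤ α) (hβ : 0 ≤ β) (hγ : 0 ≤ γ)
    (hsum : α + β + γ = 1)
    (hdd : d = α * a.2 + β * b.2 + γ * c.2)
    (hrr : r = α * a.1 + β * b.1 + γ * c.1) :
    ∃ p ∈ ({a, b, c} : Set (ℝ × ℝ)), ∃ q ∈ ({a, b, c} : Set (ℝ × ℝ)),
      ∃ s ∈ Set.Icc (0 : ℝ) 1,
        s * p.2 + (1 - s) * q.2 = d ∧ s * p.1 + (1 - s) * q.1 ≥ r := by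
  rcases le_total a.2 b.2 with h1 | h1
  · rcases le_total b.2 c.2 with h2 | h2
    · obtain ⟨p, hp, q, hq, s, hs, k2, k1⟩ :=
        tri_core a b c β γ d r hβ hγ (by linarith) h1 h2
          (by linear_combination hdd + a.2 * hsum) (by linear_combination hrr + a.1 * hsum)
      exact ⟨p, by simp only [Set.mem_insert_iff, Set.mem_singleton_iff] at hp ⊢; tauto, q, by simp only [Set.mem_insert_iff, Set.mem_singleton_iff] at hq ⊢; tauto, s, hs, k2, k1⟩
    · rcases le_total a.2 c.2 with h3 | h3
      · obtain ⟨p, hp, q, hq, s, hs, k2, k1⟩ :=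
          tri_core a c b γ β d r hγ hβ (by linarith) h3 h2
            (by linear_combination hdd + a.2 * hsum) (by linear_combination hrr + a.1 * hsum)
        exact ⟨p, by simp only [Set.mem_insert_iff, Set.mem_singleton_iff] at hp ⊢; tauto, q, by simp only [Set.mem_insert_iff, Set.mem_singleton_iff] at hq ⊢; tauto, s, hs, k2, k1⟩
      · obtain ⟨p, hp, q, hq, s, hs, k2, k1⟩ :=
          tri_core c a b α β d r hα hβ (by linarith) h3 h1
            (by linear_combination hdd + c.2 * hsum) (by linear_combination hrr + c.1 * hsum)
        exact ⟨p, by simp only [Set.mem_insert_iff, Set.mem_singleton_iff] at hp ⊢; tauto, q, by simp only [Set.mem_insert_iff, Set.mem_singleton_iff] at hq ⊢; tauto, s, hs, k2, k1⟩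
  · rcases le_total a.2 c.2 with h2 | h2
    · obtain ⟨p, hp, q, hq, s, hs, k2, k1⟩ :=
        tri_core b a c α γ d r hα hγ (by linarith) h1 h2
          (by linear_combination hdd + b.2 * hsum) (by linear_combination hrr + b.1 * hsum)
      exact ⟨p, by simp only [Set.mem_insert_iff, Set.mem_singleton_iff] at hp ⊢; tauto, q, by simp only [Set.mem_insert_iff, Set.mem_singleton_iff] at hq ⊢; tauto, s, hs, k2, k1⟩
    · rcases le_total b.2 c.2 with h3 | h3
      · obtain ⟨p, hp, q, hq, s, hs, k2, k1⟩ :=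
          tri_core b c a γ α d r hγ hα (by linarith) h3 h2
            (by linear_combination hdd + b.2 * hsum) (by linear_combination hrr + b.1 * hsum)
        exact ⟨p, by simp only [Set.mem_insert_iff, Set.mem_singleton_iff] at hp ⊢; tauto, q, by simp only [Set.mem_insert_iff, Set.mem_singleton_iff] at hq ⊢; tauto, s, hs, k2, k1⟩
      · obtain ⟨p, hp, q, hq, s, hs, k2, k1⟩ :=
          tri_core c b a β α d r hβ hα (by linarith) h3 h1
            (by linear_combination hdd + c.2 * hsum) (by linear_combination hrr + c.1 * hsum)
        exact ⟨p, by simp only [Set.mem_insert_iff, Set.mem_singleton_iff] at hp ⊢; tauto, q, by simp only [Set.mem_insert_iff, Set.mem_singleton_iff] at hq ⊢; tauto, s, hs, k2, k1⟩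

/-- Finset version by induction. -/
lemma finset_two_point (t : Finset (ℝ × ℝ)) :
    ∀ x : ℝ × ℝ, x ∈ convexHull ℝ (t : Set (ℝ × ℝ)) →
      ∃ p ∈ (t : Set (ℝ × ℝ)), ∃ q ∈ (t : Set (ℝ × ℝ)), ∃ s ∈ Set.Icc (0 : ℝ) 1,
        s * p.2 + (1 - s) * q.2 = x.2 ∧ s * p.1 + (1 - s) * q.1 ≥ x.1 := by
  induction t using Finset.induction_on with
  | empty => intro x hx; simp at hx
  | @insert a t ha ih =>
    intro x hx
    rcases t.eq_empty_or_nonempty with rfl | hne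
    · have hxa : x = a := by simp at hx; exact hx
      exact ⟨a, by simp, a, by simp, 1, ⟨zero_le_one, le_refl 1⟩, by rw [hxa]; ring,
        by rw [hxa]; nlinarith [le_refl a.1]⟩
    · rw [Finset.coe_insert, convexHull_insert (Finset.coe_nonempty.2 hne)] at hx
      rw [mem_convexJoin] at hx
      obtain ⟨a', ha', z, hz, hxz⟩ := hx
      obtain ⟨θ1, θ2, hθ1, hθ2, hθ, hxeq⟩ := hxz
      rw [show a' = a from by simpa using ha'] at hxeq

      obtain ⟨p, hp, q, hq, s, hs, h2, h1⟩ := ih z hz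
      have hx1 : x.1 = θ1 * a.1 + θ2 * z.1 := by
        rw [← hxeq]; simp [smul_eq_mul]
      have hx2 : x.2 = θ1 * a.2 + θ2 * z.2 := by
        rw [← hxeq]; simp [smul_eq_mul]
      obtain ⟨P, hP, Q, hQ, u, hu, k2, k1⟩ :=
        tri a p q θ1 (θ2 * s) (θ2 * (1 - s)) x.2
          (θ1 * a.1 + (θ2 * s) * p.1 + (θ2 * (1 - s)) * q.1)
          hθ1 (mul_nonneg hθ2 hs.1) (mul_nonneg hθ2 (by linarith [hs.2]))
          (by linarith) (by linear_combination hx2 - θ2 * h2) rfl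
      have hval : θ1 * a.1 + (θ2 * s) * p.1 + (θ2 * (1 - s)) * q.1 ≥ x.1 := by
        nlinarith [mul_le_mul_of_nonneg_left h1 hθ2]
      have memtrans : ∀ y : ℝ × ℝ, y ∈ ({a, p, q} : Set (ℝ × ℝ)) →
          y ∈ ((insert a t : Finset (ℝ × ℝ)) : Set (ℝ × ℝ)) := by
        intro y hy
        simp only [Set.mem_insert_iff, Set.mem_singleton_iff] at hy
        simp only [Finset.coe_insert, Set.mem_insert_iff]
        rcases hy with rfl | rfl | rfl
        · left; rfl
        · right; exact hp
        · right; exact hq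
      exact ⟨P, memtrans P hP, Q, memtrans Q hQ, u, hu, k2, le_trans hval k1⟩

/-- Geometric kernel of the two-price theorem: any point `(r, d)` of the convex hull of a
nonempty compact `S ⊆ ℝ²` can be matched in the second coordinate and weakly improved in
the first coordinate by a convex combination of at most two points of `S`. -/
theorem convexHull_two_point_improvement
    (S : Set (ℝ × ℝ)) (hSne : S.Nonempty) (hScomp : IsCompact S)
    (r d : ℝ) (hrd : (r, d) ∈ convexHull ℝ S) :
    ∃ p ∈ S, ∃ q ∈ S, ∃ t : ℝ, t ∈ Set.Icc (0 : ℝ) 1 ∧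
      t * p.2 + (1 - t) * q.2 = d ∧ t * p.1 + (1 - t) * q.1 ≥ r := by
  rw [convexHull_eq_union] at hrd
  obtain ⟨t, ht⟩ := Set.mem_iUnion.1 hrd
  obtain ⟨hts, ht⟩ := Set.mem_iUnion.1 ht
  obtain ⟨_, hmem⟩ := Set.mem_iUnion.1 ht
  obtain ⟨p, hp, q, hq, s, hs, h2, h1⟩ := finset_two_point t (r, d) hmem
  exact ⟨p, hts hp, q, hts hq, s, hs, h2, h1⟩
end

section
/- Let K (products), 𝒴 (demand states), and M (raw materials) be finite nonempty sets. Let π : 𝒴 → ℝ satisfy π(y) ≥ 0 for all y, let β : M → K → ℝ satisfy β(m)(k) ≥ 0, and for each k ∈ K let α_k ∈ ℝ, let 𝒫_k ⊆ ℝ be a nonempty compact set, and let F_k : ℝ → 𝒴 → ℝ be continuous in its first argument with F_k(p, y) ≥ 0 for p ∈ 𝒫_k. For (k, y) ∈ K × 𝒴 define Ω_k(y) = {(z·(p − α_k)·F_k(p, y), z·F_k(p, y)) : p ∈ 𝒫_k, z ∈ {0,1}} ⊆ ℝ². Suppose given reals r̂_k(y), d̂_k(y) with (r̂_k(y), d̂_k(y))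 ∈ convexHull(Ω_k(y)) for all (k, y), and reals r̂ and μ̂_m (m ∈ M) with Σ_{k ∈ K} Σ_{y ∈ 𝒴} π(y)·r̂_k(y) ≥ r̂ and Σ_{k ∈ K} β(m)(k)·Σ_{y ∈ 𝒴} π(y)·d̂_k(y) ≤ μ̂_m for all m ∈ M. Then there exist functions η : K × 𝒴 → [0,1], z¹, z² : K × 𝒴 → {0,1}, and p¹, p² : K × 𝒴 → ℝ with p¹(k,y), p²(k,y) ∈ 𝒫_k, such that setting r*_k(y) = η(k,y)·z¹(k,y)·(p¹(k,y) − α_k)·F_k(p¹(k,y), y) + (1 − η(k,y))·z²(k,y)·(p²(k,y) − α_k)·F_k(p²(k,y), y) and d*_k(y) = η(k,y)·z¹(k,y)·F_k(p¹(k,y), y) + (1 − η(k,y))·z²(k,y)·F_k(p²(k,y), y), one has d*_k(y) = d̂_k(y) for all (k, y), Σ_{k} Σ_{y} π(y)·r*_k(y) ≥ r̂, and Σ_{k} β(m)(k)·Σ_{y} π(y)·d*_k(y) ≤ μ̂_m for all m ∈ M. -/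
section helpers

/-- Triangle reduction, low-side version. -/
lemma tri_low (v1 v2 v3 : ℝ × ℝ) (m1 m2 m3 D R : ℝ)
    (hm1 : 0 ≤ m1) (hm2 : 0 ≤ m2) (hm3 : 0 ≤ m3)
    (hs : m1 + m2 + m3 = 1)
    (hd : m1 * v1.2 + m2 * v2.2 + m3 * v3.2 = D)
    (hr : m1 * v1.1 + m2 * v2.1 + m3 * v3.1 ≥ R)
    (h1 : v1.2 ≤ D) (h2 : v2.2 ≤ D) :
    ∃ a ∈ ({v1, v2, v3} : Set (ℝ × ℝ)), ∃ b ∈ ({v1, v2, v3} : Set (ℝ × ℝ)),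
      ∃ η ∈ Set.Icc (0:ℝ) 1, η * a.2 + (1 - η) * b.2 = D ∧ η * a.1 + (1 - η) * b.1 ≥ R := by
  rcases le_or_gt v3.2 D with h3 | h3
  · -- all second coords ≤ D
    have key : m1 * (D - v1.2) + m2 * (D - v2.2) + m3 * (D - v3.2) = 0 := by
      linear_combination D * hs - hd
    have n1 := mul_nonneg hm1 (sub_nonneg.2 h1)
    have n2 := mul_nonneg hm2 (sub_nonneg.2 h2)
    have n3 := mul_nonneg hm3 (sub_nonneg.2 h3)
    have t1 : m1 * (D - v1.2) = 0 := by linarith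
    have t2 : m2 * (D - v2.2) = 0 := by linarith
    have t3 : m3 * (D - v3.2) = 0 := by linarith
    by_contra hcon
    push_neg at hcon
    have single : ∀ v ∈ ({v1, v2, v3} : Set (ℝ × ℝ)), v.2 = D → v.1 < R := by
      intro v hv hvD
      by_contra hge
      push_neg at hge
      have := hcon v hv v hv 1 ⟨zero_le_one, le_refl 1⟩
      simp [hvD] at this
      linarith
    have hR : m1 * R + m2 * R + m3 * R = R := by linear_combination R * hs
    have b1 : m1 * v1.1 ≤ m1 * R := by
      rcases eq_or_lt_of_le hm1 with h | h
      · simp [← h]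
      · have hv : v1.2 = D := by
          rcases mul_eq_zero.1 t1 with h' | h' <;> [linarith; linarith]
        exact mul_le_mul_of_nonneg_left (le_of_lt <| single v1 (by simp) hv) hm1
    have b2 : m2 * v2.1 ≤ m2 * R := by
      rcases eq_or_lt_of_le hm2 with h | h
      · simp [← h]
      · have hv : v2.2 = D := by
          rcases mul_eq_zero.1 t2 with h' | h' <;> [linarith; linarith]
        exact mul_le_mul_of_nonneg_left (le_of_lt <| single v2 (by simp) hv) hm2
    have b3 : m3 * v3.1 ≤ m3 * R := by
      rcases eq_or_lt_of_le hm3 with h | h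
      · simp [← h]
      · have hv : v3.2 = D := by
          rcases mul_eq_zero.1 t3 with h' | h' <;> [linarith; linarith]
        exact mul_le_mul_of_nonneg_left (le_of_lt <| single v3 (by simp) hv) hm3
    have hpos : 0 < m1 ∨ 0 < m2 ∨ 0 < m3 := by
      by_contra hc; push_neg at hc; linarith [hc.1, hc.2.1, hc.2.2]
    rcases hpos with h | h | h
    · have hv : v1.2 = D := by
        rcases mul_eq_zero.1 t1 with h' | h' <;> [linarith; linarith]
      have hlt := mul_lt_mul_of_pos_left (single v1 (by simp) hv) h
      linarith
    · have hv : v2.2 = D := by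
        rcases mul_eq_zero.1 t2 with h' | h' <;> [linarith; linarith]
      have hlt := mul_lt_mul_of_pos_left (single v2 (by simp) hv) h
      linarith
    · have hv : v3.2 = D := by
        rcases mul_eq_zero.1 t3 with h' | h' <;> [linarith; linarith]
      have hlt := mul_lt_mul_of_pos_left (single v3 (by simp) hv) h
      linarith
  · -- v3.2 > D : chords from v1 or v2 to v3
    have den1 : 0 < v3.2 - v1.2 := by linarith
    have den2 : 0 < v3.2 - v2.2 := by linarith
    set cv1 : ℝ := ((v3.2 - D) * v1.1 + (D - v1.2) * v3.1) / (v3.2 - v1.2) with hcv1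
    set cv2 : ℝ := ((v3.2 - D) * v2.1 + (D - v2.2) * v3.1) / (v3.2 - v2.2) with hcv2
    set m : ℝ := max cv1 cv2 with hm
    have q1 : (v3.2 - D) * v1.1 + (D - v1.2) * v3.1 ≤ m * (v3.2 - v1.2) := by
      have h := le_max_left cv1 cv2
      rw [hcv1, div_le_iff₀ den1] at h
      linarith
    have q2 : (v3.2 - D) * v2.1 + (D - v2.2) * v3.1 ≤ m * (v3.2 - v2.2) := by
      have h := le_max_right cv1 cv2
      rw [hcv2, div_le_iff₀ den2] at h
      linarith
    have s1 := mul_le_mul_of_nonneg_left q1 hm1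
    have s2 := mul_le_mul_of_nonneg_left q2 hm2
    have s3 : m3 * ((v3.2 - D) * v3.1 + (D - v3.2) * v3.1) ≤ m3 * (m * (v3.2 - v3.2)) := by
      have e : (v3.2 - D) * v3.1 + (D - v3.2) * v3.1 = 0 := by ring
      rw [e]; simp
    have sum := add_le_add (add_le_add s1 s2) s3
    have L : m1 * ((v3.2 - D) * v1.1 + (D - v1.2) * v3.1)
        + m2 * ((v3.2 - D) * v2.1 + (D - v2.2) * v3.1)
        + m3 * ((v3.2 - D) * v3.1 + (D - v3.2) * v3.1)
        = (v3.2 - D) * (m1 * v1.1 + m2 * v2.1 + m3 * v3.1) := by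
      linear_combination v3.1 * D * hs - v3.1 * hd
    have Rr : m1 * (m * (v3.2 - v1.2)) + m2 * (m * (v3.2 - v2.2)) + m3 * (m * (v3.2 - v3.2))
        = m * (v3.2 - D) := by
      linear_combination m * v3.2 * hs - m * hd
    rw [L, Rr] at sum
    have hRm : R ≤ m := by
      nlinarith [sum, mul_le_mul_of_nonneg_left hr (le_of_lt (sub_pos.2 h3)), h3]
    have hach : ∃ x ∈ ({v1, v2, v3} : Set (ℝ × ℝ)), x.2 ≤ D ∧
        ((v3.2 - D) * x.1 + (D - x.2) * v3.1) / (v3.2 - x.2) = m := by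
      rcases max_cases cv1 cv2 with ⟨he, _⟩ | ⟨he, _⟩
      · exact ⟨v1, by simp, h1, by rw [← hcv1]; exact he.symm⟩
      · exact ⟨v2, by simp, h2, by rw [← hcv2]; exact he.symm⟩
    obtain ⟨x, hxmem, hxD, hxval⟩ := hach
    have denx : 0 < v3.2 - x.2 := by linarith
    refine ⟨x, hxmem, v3, by simp, (v3.2 - D) / (v3.2 - x.2), ⟨?_, ?_⟩, ?_, ?_⟩
    · exact div_nonneg (by linarith) (le_of_lt denx)
    · rw [div_le_one denx]; linarith
    · field_simp
      ring
    · have h1η : (1 : ℝ) - (v3.2 - D) / (v3.2 - x.2) = (D - x.2) / (v3.2 - x.2) := by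
        field_simp
        ring
      rw [h1η]
      have e : (v3.2 - D) / (v3.2 - x.2) * x.1 + (D - x.2) / (v3.2 - x.2) * v3.1
          = ((v3.2 - D) * x.1 + (D - x.2) * v3.1) / (v3.2 - x.2) := by ring
      rw [e, hxval]
      exact hRm


/-- Triangle reduction, high-side version. -/
lemma tri_high (v1 v2 v3 : ℝ × ℝ) (m1 m2 m3 D R : ℝ)
    (hm1 : 0 ≤ m1) (hm2 : 0 ≤ m2) (hm3 : 0 ≤ m3)
    (hs : m1 + m2 + m3 = 1)
    (hd : m1 * v1.2 + m2 * v2.2 + m3 * v3.2 = D)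
    (hr : m1 * v1.1 + m2 * v2.1 + m3 * v3.1 ≥ R)
    (h1 : D ≤ v1.2) (h2 : D ≤ v2.2) :
    ∃ a ∈ ({v1, v2, v3} : Set (ℝ × ℝ)), ∃ b ∈ ({v1, v2, v3} : Set (ℝ × ℝ)),
      ∃ η ∈ Set.Icc (0:ℝ) 1, η * a.2 + (1 - η) * b.2 = D ∧ η * a.1 + (1 - η) * b.1 ≥ R := by
  have main := tri_low (v1.1, -v1.2) (v2.1, -v2.2) (v3.1, -v3.2) m1 m2 m3 (-D) R
    hm1 hm2 hm3 hs (by simpa using by linarith [hd] : m1 * (-v1.2) + m2 * (-v2.2) + m3 * (-v3.2) = -D)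
    (by simpa using hr) (by simpa using h1) (by simpa using h2)
  obtain ⟨a, ha, b, hb, η, hη, ed, er⟩ := main
  simp only [Set.mem_insert_iff, Set.mem_singleton_iff] at ha hb
  have conv : ∀ c : ℝ × ℝ, (c = (v1.1, -v1.2) ∨ c = (v2.1, -v2.2) ∨ c = (v3.1, -v3.2)) →
      ∃ c₀ ∈ ({v1, v2, v3} : Set (ℝ × ℝ)), c.1 = c₀.1 ∧ c.2 = -c₀.2 := by
    rintro c (rfl | rfl | rfl)
    · exact ⟨v1, by simp, rfl, rfl⟩
    · exact ⟨v2, by simp, rfl, rfl⟩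
    · exact ⟨v3, by simp, rfl, rfl⟩
  obtain ⟨a₀, ha₀, ha1, ha2⟩ := conv a ha
  obtain ⟨b₀, hb₀, hb1, hb2⟩ := conv b hb
  refine ⟨a₀, ha₀, b₀, hb₀, η, hη, ?_, ?_⟩
  · rw [ha2, hb2] at ed; linarith
  · rw [ha1, hb1] at er; linarith

/-- Triangle reduction, general version. -/
lemma tri_gen (v1 v2 v3 : ℝ × ℝ) (m1 m2 m3 D R : ℝ)
    (hm1 : 0 ≤ m1) (hm2 : 0 ≤ m2) (hm3 : 0 ≤ m3)
    (hs : m1 + m2 + m3 = 1)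
    (hd : m1 * v1.2 + m2 * v2.2 + m3 * v3.2 = D)
    (hr : m1 * v1.1 + m2 * v2.1 + m3 * v3.1 ≥ R) :
    ∃ a ∈ ({v1, v2, v3} : Set (ℝ × ℝ)), ∃ b ∈ ({v1, v2, v3} : Set (ℝ × ℝ)),
      ∃ η ∈ Set.Icc (0:ℝ) 1, η * a.2 + (1 - η) * b.2 = D ∧ η * a.1 + (1 - η) * b.1 ≥ R := by
  have fix : ∀ w1 w2 w3 : ℝ × ℝ, ({w1, w2, w3} : Set (ℝ × ℝ)) ⊆ {v1, v2, v3} →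
      (∃ a ∈ ({w1, w2, w3} : Set (ℝ × ℝ)), ∃ b ∈ ({w1, w2, w3} : Set (ℝ × ℝ)),
        ∃ η ∈ Set.Icc (0:ℝ) 1, η * a.2 + (1 - η) * b.2 = D ∧ η * a.1 + (1 - η) * b.1 ≥ R) →
      (∃ a ∈ ({v1, v2, v3} : Set (ℝ × ℝ)), ∃ b ∈ ({v1, v2, v3} : Set (ℝ × ℝ)),
        ∃ η ∈ Set.Icc (0:ℝ) 1, η * a.2 + (1 - η) * b.2 = D ∧ η * a.1 + (1 - η) * b.1 ≥ R) := by
    rintro w1 w2 w3 hsub ⟨a, ha, b, hb, η, hη, ed, er⟩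
    exact ⟨a, hsub ha, b, hsub hb, η, hη, ed, er⟩
  rcases le_total v1.2 D with H1 | H1 <;> rcases le_total v2.2 D with H2 | H2 <;>
    rcases le_total v3.2 D with H3 | H3
  · exact tri_low v1 v2 v3 m1 m2 m3 D R hm1 hm2 hm3 hs hd hr H1 H2
  · exact tri_low v1 v2 v3 m1 m2 m3 D R hm1 hm2 hm3 hs hd hr H1 H2
  · refine fix v1 v3 v2 (by intro c; simp only [Set.mem_insert_iff, Set.mem_singleton_iff]; tauto) ?_
    exact tri_low v1 v3 v2 m1 m3 m2 D R hm1 hm3 hm2 (by linarith) (by linarith) (by linarith) H1 H3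
  · refine fix v2 v3 v1 (by intro c; simp only [Set.mem_insert_iff, Set.mem_singleton_iff]; tauto) ?_
    exact tri_high v2 v3 v1 m2 m3 m1 D R hm2 hm3 hm1 (by linarith) (by linarith) (by linarith) H2 H3
  · refine fix v2 v3 v1 (by intro c; simp only [Set.mem_insert_iff, Set.mem_singleton_iff]; tauto) ?_
    exact tri_low v2 v3 v1 m2 m3 m1 D R hm2 hm3 hm1 (by linarith) (by linarith) (by linarith) H2 H3
  · refine fix v1 v3 v2 (by intro c; simp only [Set.mem_insert_iff, Set.mem_singleton_iff]; tauto) ?_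
    exact tri_high v1 v3 v2 m1 m3 m2 D R hm1 hm3 hm2 (by linarith) (by linarith) (by linarith) H1 H3
  · exact tri_high v1 v2 v3 m1 m2 m3 D R hm1 hm2 hm3 hs hd hr H1 H2
  · exact tri_high v1 v2 v3 m1 m2 m3 D R hm1 hm2 hm3 hs hd hr H1 H2

/-- Two-point representation over finite sets. -/
lemma two_point_finset (t : Finset (ℝ × ℝ)) :
    ∀ x ∈ convexHull ℝ (t : Set (ℝ × ℝ)),
      ∃ a ∈ (t : Set (ℝ × ℝ)), ∃ b ∈ (t : Set (ℝ × ℝ)),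
        ∃ η ∈ Set.Icc (0:ℝ) 1, η * a.2 + (1 - η) * b.2 = x.2 ∧ η * a.1 + (1 - η) * b.1 ≥ x.1 := by
  induction t using Finset.induction_on with
  | empty => simp
  | @insert v s hv ih =>
    intro x hx
    rcases s.eq_empty_or_nonempty with rfl | hne
    · have hx' : x ∈ ({v} : Set (ℝ × ℝ)) := by
        simpa using hx
      rw [Set.mem_singleton_iff] at hx'
      subst hx'
      exact ⟨x, by simp, x, by simp, 1, ⟨zero_le_one, le_refl 1⟩, by ring, by simp⟩
    · rw [Finset.coe_insert, convexHull_insert (Finset.coe_nonempty.mpr hne)] at hx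
      rw [mem_convexJoin] at hx
      obtain ⟨a', ha', y, hy, hseg⟩ := hx
      rw [Set.mem_singleton_iff] at ha'
      rw [ha'] at hseg
      obtain ⟨θ, τ, hθ, hτ, hsum, heq⟩ := hseg
      obtain ⟨a, ha, b, hb, η, ⟨hη0, hη1⟩, ed, er⟩ := ih y hy
      have hx2 : θ * v.2 + τ * y.2 = x.2 := by
        have h := congrArg Prod.snd heq
        simp only [Prod.snd_add, Prod.smul_snd, smul_eq_mul] at h
        exact h
      have hx1 : θ * v.1 + τ * y.1 = x.1 := by
        have h := congrArg Prod.fst heq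
        simp only [Prod.fst_add, Prod.smul_fst, smul_eq_mul] at h
        exact h
      have hrτ := mul_le_mul_of_nonneg_left er hτ
      have main := tri_gen v a b θ (τ * η) (τ * (1 - η)) x.2 x.1 hθ
        (mul_nonneg hτ hη0) (mul_nonneg hτ (by linarith)) (by linarith)
        (by linear_combination τ * ed + hx2) (by nlinarith [hrτ, hx1])
      obtain ⟨a₀, ha₀, b₀, hb₀, η₀, hη₀, ed₀, er₀⟩ := main
      have sub : ({v, a, b} : Set (ℝ × ℝ)) ⊆ ((insert v s : Finset (ℝ × ℝ)) : Set (ℝ × ℝ)) := by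
        intro c hc
        simp only [Set.mem_insert_iff, Set.mem_singleton_iff] at hc
        simp only [Finset.coe_insert, Set.mem_insert_iff]
        rcases hc with rfl | rfl | rfl
        · exact Or.inl rfl
        · exact Or.inr ha
        · exact Or.inr hb
      exact ⟨a₀, sub ha₀, b₀, sub hb₀, η₀, hη₀, ed₀, er₀⟩

/-- Two-point representation for convex hulls. -/
lemma two_point_hull {S : Set (ℝ × ℝ)} {x : ℝ × ℝ} (hx : x ∈ convexHull ℝ S) :
    ∃ a ∈ S, ∃ b ∈ S, ∃ η ∈ Set.Icc (0:ℝ) 1,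
      η * a.2 + (1 - η) * b.2 = x.2 ∧ η * a.1 + (1 - η) * b.1 ≥ x.1 := by
  rw [convexHull_eq] at hx
  obtain ⟨ι, t, w, z, hw0, hw1, hzS, hcm⟩ := hx
  have hx' : x ∈ convexHull ℝ ((t.image z : Finset (ℝ × ℝ)) : Set (ℝ × ℝ)) := by
    rw [← hcm]
    exact Finset.centerMass_mem_convexHull t hw0 (by rw [hw1]; norm_num)
      (fun i hi => by simp only [Finset.coe_image, Set.mem_image, Finset.mem_coe]; exact ⟨i, hi, rfl⟩)
  obtain ⟨a, ha, b, hb, η, hη, ed, er⟩ := two_point_finset (t.image z) x hx'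
  simp only [Finset.coe_image, Set.mem_image, Finset.mem_coe] at ha hb
  obtain ⟨i, hi, rfl⟩ := ha
  obtain ⟨j, hj, rfl⟩ := hb
  exact ⟨z i, hzS i hi, z j, hzS j hj, η, hη, ed, er⟩

end helpers



/-- The Two Prices Are Sufficient Theorem: any revenue target `rhat` and
material-consumption targets `muhat m` met by a stationary randomized pricing policy
(whose per-(product, demand-state) revenue/demand pairs lie in the convex hull of
the achievable sets `Ω_k(y)`) can be met by a policy that randomizes between at most
two price/sale options for each product and each demand state. -/
theorem two_prices_sufficient
    {K Y M : Type*} [Fintype K] [Fintype Y] [Fintype M]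
    [Nonempty K] [Nonempty Y] [Nonempty M]
    (π : Y → ℝ) (hπ : ∀ y, 0 ≤ π y)
    (β : M → K → ℝ) (hβ : ∀ m k, 0 ≤ β m k)
    (α : K → ℝ)
    (P : K → Set ℝ) (hPne : ∀ k, (P k).Nonempty) (hPcomp : ∀ k, IsCompact (P k))
    (F : K → ℝ → Y → ℝ)
    (hFcont : ∀ k y, Continuous (fun p => F k p y))
    (hFnn : ∀ k y, ∀ p ∈ P k, 0 ≤ F k p y)
    (rhat dhat : K → Y → ℝ)
    (hconv : ∀ k y, (rhat k y, dhat k y) ∈ convexHull ℝ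
      {v : ℝ × ℝ | ∃ p ∈ P k, ∃ z ∈ ({0, 1} : Set ℝ),
        v = (z * (p - α k) * F k p y, z * F k p y)})
    (rtot : ℝ) (muhat : M → ℝ)
    (hr : ∑ k, ∑ y, π y * rhat k y ≥ rtot)
    (hμ : ∀ m, ∑ k, β m k * ∑ y, π y * dhat k y ≤ muhat m) :
    ∃ (η z₁ z₂ p₁ p₂ : K → Y → ℝ),
      (∀ k y, η k y ∈ Set.Icc (0 : ℝ) 1) ∧
      (∀ k y, z₁ k y ∈ ({0, 1} : Set ℝ)) ∧
      (∀ k y, z₂ k y ∈ ({0, 1} : Set ℝ)) ∧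
      (∀ k y, p₁ k y ∈ P k) ∧
      (∀ k y, p₂ k y ∈ P k) ∧
      (∀ k y,
        η k y * (z₁ k y * F k (p₁ k y) y)
          + (1 - η k y) * (z₂ k y * F k (p₂ k y) y) = dhat k y) ∧
      (∑ k, ∑ y, π y *
          (η k y * (z₁ k y * (p₁ k y - α k) * F k (p₁ k y) y)
            + (1 - η k y) * (z₂ k y * (p₂ k y - α k) * F k (p₂ k y) y)) ≥ rtot) ∧
      (∀ m, ∑ k, β m k * ∑ y, π y *
          (η k y * (z₁ k y * F k (p₁ k y) y)
            + (1 - η k y) * (z₂ k y * F k (p₂ k y) y)) ≤ muhat m) := by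
  have H : ∀ k y, ∃ (e z1 z2 q1 q2 : ℝ),
      e ∈ Set.Icc (0:ℝ) 1 ∧ z1 ∈ ({0, 1} : Set ℝ) ∧ z2 ∈ ({0, 1} : Set ℝ) ∧
      q1 ∈ P k ∧ q2 ∈ P k ∧
      (e * (z1 * F k q1 y) + (1 - e) * (z2 * F k q2 y) = dhat k y) ∧
      (e * (z1 * (q1 - α k) * F k q1 y) + (1 - e) * (z2 * (q2 - α k) * F k q2 y) ≥ rhat k y) := by
    intro k y
    obtain ⟨a, ha, b, hb, e, he, ed, er⟩ := two_point_hull (hconv k y)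
    obtain ⟨q1, hq1, z1, hz1, haeq⟩ := ha
    obtain ⟨q2, hq2, z2, hz2, hbeq⟩ := hb
    refine ⟨e, z1, z2, q1, q2, he, hz1, hz2, hq1, hq2, ?_, ?_⟩
    · have ha2 : a.2 = z1 * F k q1 y := by rw [haeq]
      have hb2 : b.2 = z2 * F k q2 y := by rw [hbeq]
      rw [ha2, hb2] at ed
      exact ed
    · have ha1 : a.1 = z1 * (q1 - α k) * F k q1 y := by rw [haeq]
      have hb1 : b.1 = z2 * (q2 - α k) * F k q2 y := by rw [hbeq]
      rw [ha1, hb1] at er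
      exact er
  choose η z₁ z₂ p₁ p₂ h1 h2 h3 h4 h5 h6 h7 using H
  refine ⟨η, z₁, z₂, p₁, p₂, h1, h2, h3, h4, h5, h6, ?_, ?_⟩
  · calc ∑ k, ∑ y, π y *
          (η k y * (z₁ k y * (p₁ k y - α k) * F k (p₁ k y) y)
            + (1 - η k y) * (z₂ k y * (p₂ k y - α k) * F k (p₂ k y) y))
        ≥ ∑ k, ∑ y, π y * rhat k y := by
          refine Finset.sum_le_sum fun k _ => Finset.sum_le_sum fun y _ => ?_
          exact mul_le_mul_of_nonneg_left (h7 k y) (hπ y)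
      _ ≥ rtot := hr
  · intro m
    calc ∑ k, β m k * ∑ y, π y *
          (η k y * (z₁ k y * F k (p₁ k y) y)
            + (1 - η k y) * (z₂ k y * F k (p₂ k y) y))
        = ∑ k, β m k * ∑ y, π y * dhat k y := by
          refine Finset.sum_congr rfl fun k _ => ?_
          congr 1
          exact Finset.sum_congr rfl fun y _ => by rw [h6 k y]
      _ ≤ muhat m := hμ m
end

section
/- Let θ, A_max, μ_max be nonnegative real numbers and let Q, A, μ : ℕ → ℝ be sequences satisfying, for every t ∈ ℕ: Q(t+1) = Q(t) − μ(t) + A(t), 0 ≤ A(t) ≤ A_max, 0 ≤ μ(t) ≤ μ_max, A(t) = 0 whenever Q(t) > θ, and μ(t) = 0 whenever Q(t) < 2·μ_max. If μ_max ≤ Q(0) ≤ θ + A_max, then μ_max ≤ Q(t) ≤ θ + A_max for all t ∈ ℕ. -/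
/-- Part (a) of the JPP performance theorem (sample-path, single queue): the inventory
always stays between `μmax` and `θ + Amax`. -/
theorem jpp_queue_bounds
    (θ Amax μmax : ℝ) (hθ : 0 ≤ θ) (hAmax : 0 ≤ Amax) (hμmax : 0 ≤ μmax)
    (Q A μ : ℕ → ℝ)
    (hdyn : ∀ t, Q (t + 1) = Q t - μ t + A t)
    (hA : ∀ t, 0 ≤ A t ∧ A t ≤ Amax)
    (hμ : ∀ t, 0 ≤ μ t ∧ μ t ≤ μmax)
    (hAstop : ∀ t, Q t > θ → A t = 0)
    (hμstop : ∀ t, Q t < 2 * μmax → μ t = 0)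
    (h0 : μmax ≤ Q 0 ∧ Q 0 ≤ θ + Amax) :
    ∀ t, μmax ≤ Q t ∧ Q t ≤ θ + Amax := by
  intro t
  induction t with
  | zero => exact h0
  | succ t ih =>
    obtain ⟨hlo, hhi⟩ := ih
    obtain ⟨hA0, hA1⟩ := hA t
    obtain ⟨hμ0, hμ1⟩ := hμ t
    rw [hdyn t]
    constructor
    · rcases lt_or_ge (Q t) (2 * μmax) with h | h
      · rw [hμstop t h]; linarith
      · linarith
    · rcases le_or_gt (Q t) θ with h | h
      · linarith
      · rw [hAstop t h]; linarith
end

section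
/- Let M be a finite index set, V > 0 a real number, T ≥ 1 an integer, and t₀ ∈ ℕ. For each m ∈ M let θ(m) ∈ ℝ and A_max(m), μ_max(m) ≥ 0, and let Q_m, A_m, μ_m : ℕ → ℝ satisfy Q_m(τ+1) = Q_m(τ) − μ_m(τ) + A_m(τ), 0 ≤ A_m(τ) ≤ A_max(m), and 0 ≤ μ_m(τ) ≤ μ_max(m) for all τ. Let φ, φ* : ℕ → ℝ and, for each m ∈ M, let A*_m, x*_m : ℕ → ℝ satisfy |A*_m(τ) − x*_m(τ)| ≤ max(A_max(m), μ_max(m)) for all τ. Suppose the per-slot minimization property holds: for every τ, −V·φ(τ) + Σ_{m} (Q_m(τ) − θ(m))·(A_m(τ) − μ_m(τ)) ≤ −V·φ*(τ) + Σ_{m} (Q_m(τ) − θ(m))·(A*_m(τ) − x*_m(τ)). Then, defining L(τ) = (1/2)·Σ_{m} (Q_m(τ) − θ(m))² and B = (1/2)·Σ_{m} max(A_max(m)², μ_max(m)²), one has: L(t₀+T) − L(t₀) − V·Σ_{τ=t₀}^{t₀+T−1} φ(τ) ≤ T²·B − V·Σ_{τ=t₀}^{t₀+T−1} φ*(τ)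 + Σ_{m} (Q_m(t₀) − θ(m))·Σ_{τ=t₀}^{t₀+T−1} (A*_m(τ) − x*_m(τ)). -/
/-- Deterministic core of the T-slot sample-path drift lemma for JPP: if the implemented
policy minimizes the per-slot drift-plus-penalty expression, then the T-slot Lyapunov
drift minus `V` times the implemented profit is bounded by the comparison policy's
quantities, with the queue weights frozen at the start of the frame. -/
theorem tslot_drift_lemma
    {M : Type*} [Fintype M]
    (V : ℝ) (hV : 0 < V) (T : ℕ) (hT : 1 ≤ T) (t₀ : ℕ)
    (θ Amax μmax : M → ℝ) (hAmax : ∀ m, 0 ≤ Amax m) (hμmax : ∀ m, 0 ≤ μmax m)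
    (Q A μ : M → ℕ → ℝ)
    (hdyn : ∀ m τ, Q m (τ + 1) = Q m τ - μ m τ + A m τ)
    (hA : ∀ m τ, 0 ≤ A m τ ∧ A m τ ≤ Amax m)
    (hμ : ∀ m τ, 0 ≤ μ m τ ∧ μ m τ ≤ μmax m)
    (φ φs : ℕ → ℝ) (As xs : M → ℕ → ℝ)
    (hcomp : ∀ m τ, |As m τ - xs m τ| ≤ max (Amax m) (μmax m))
    (hmin : ∀ τ,
      -V * φ τ + ∑ m, (Q m τ - θ m) * (A m τ - μ m τ)
        ≤ -V * φs τ + ∑ m, (Q m τ - θ m) * (As m τ - xs m τ)) :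
    ((1 : ℝ) / 2) * ∑ m, (Q m (t₀ + T) - θ m) ^ 2
        - (1 / 2) * ∑ m, (Q m t₀ - θ m) ^ 2
        - V * ∑ τ ∈ Finset.Ico t₀ (t₀ + T), φ τ
      ≤ (T : ℝ) ^ 2 * ((1 / 2) * ∑ m, max ((Amax m) ^ 2) ((μmax m) ^ 2))
        - V * ∑ τ ∈ Finset.Ico t₀ (t₀ + T), φs τ
        + ∑ m, (Q m t₀ - θ m) * ∑ τ ∈ Finset.Ico t₀ (t₀ + T), (As m τ - xs m τ) := by
  classical
  set W : M → ℕ → ℝ := fun m τ => Q m τ - θ m with hW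
  set d : M → ℕ → ℝ := fun m τ => A m τ - μ m τ with hd
  set c : M → ℝ := fun m => max (Amax m) (μmax m) with hc
  have hc0 : ∀ m, 0 ≤ c m := fun m => le_trans (hAmax m) (le_max_left _ _)
  have hdabs : ∀ m τ, |d m τ| ≤ c m := by
    intro m τ
    rw [abs_le]
    constructor
    · have h1 := (hA m τ).1; have h2 := (hμ m τ).2
      have h3 : μmax m ≤ c m := le_max_right _ _
      simp only [hd]; linarith
    · have h1 := (hA m τ).2; have h2 := (hμ m τ).1
      have h3 : Amax m ≤ c m := le_max_left _ _
      simp only [hd]; linarith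
  have hcsq : ∀ m, c m ^ 2 = max (Amax m ^ 2) (μmax m ^ 2) := by
    intro m
    rcases le_total (Amax m) (μmax m) with h | h
    · rw [show c m = μmax m from max_eq_right h,
        max_eq_right (by nlinarith [hAmax m, hμmax m])]
    · rw [show c m = Amax m from max_eq_left h,
        max_eq_left (by nlinarith [hAmax m, hμmax m])]
  set S : ℝ := ∑ m, max (Amax m ^ 2) (μmax m ^ 2) with hS
  have hS0 : 0 ≤ S := Finset.sum_nonneg fun m _ => le_max_of_le_left (sq_nonneg _)
  have hScsq : S = ∑ m, c m ^ 2 := by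
    rw [hS]; exact Finset.sum_congr rfl fun m _ => (hcsq m).symm
  have hWstep : ∀ m τ, W m (τ + 1) = W m τ + d m τ := by
    intro m τ; simp only [hW, hd, hdyn m τ]; ring
  -- deviation bound
  have hdev : ∀ m k, |W m (t₀ + k) - W m t₀| ≤ (k : ℝ) * c m := by
    intro m k
    induction k with
    | zero => simp
    | succ k ih =>
        have he : W m (t₀ + (k + 1)) - W m t₀ = (W m (t₀ + k) - W m t₀) + d m (t₀ + k) := by
          have h2 : W m (t₀ + (k + 1)) = W m (t₀ + k) + d m (t₀ + k) := hWstep m (t₀ + k)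
          rw [h2]; ring
        rw [he]
        calc |(W m (t₀ + k) - W m t₀) + d m (t₀ + k)|
            ≤ |W m (t₀ + k) - W m t₀| + |d m (t₀ + k)| := abs_add_le _ _
          _ ≤ (k : ℝ) * c m + c m := add_le_add ih (hdabs _ _)
          _ = ((k + 1 : ℕ) : ℝ) * c m := by push_cast; ring
  -- per-slot bound
  have hslot : ∀ k : ℕ,
      (1 / 2 : ℝ) * ∑ m, W m (t₀ + (k + 1)) ^ 2 - (1 / 2) * ∑ m, W m (t₀ + k) ^ 2
          - V * φ (t₀ + k)
        ≤ (1 / 2) * S + (k : ℝ) * S - V * φs (t₀ + k)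
          + ∑ m, W m t₀ * (As m (t₀ + k) - xs m (t₀ + k)) := by
    intro k
    have hid : (1 / 2 : ℝ) * ∑ m, W m (t₀ + (k + 1)) ^ 2 - (1 / 2) * ∑ m, W m (t₀ + k) ^ 2
        = ∑ m, W m (t₀ + k) * d m (t₀ + k) + (1 / 2) * ∑ m, d m (t₀ + k) ^ 2 := by
      rw [Finset.mul_sum, Finset.mul_sum, Finset.mul_sum,
        ← Finset.sum_sub_distrib, ← Finset.sum_add_distrib]
      refine Finset.sum_congr rfl fun m _ => ?_
      have h2 : W m (t₀ + (k + 1)) = W m (t₀ + k) + d m (t₀ + k) := hWstep m (t₀ + k)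
      rw [h2]; ring
    have hd2 : (1 / 2 : ℝ) * ∑ m, d m (t₀ + k) ^ 2 ≤ (1 / 2) * S := by
      have hle : ∑ m, d m (t₀ + k) ^ 2 ≤ S := by
        rw [hScsq]
        refine Finset.sum_le_sum fun m _ => ?_
        have := hdabs m (t₀ + k)
        nlinarith [abs_nonneg (d m (t₀ + k)), sq_abs (d m (t₀ + k)), hc0 m]
      linarith
    have hmink : -V * φ (t₀ + k) + ∑ m, W m (t₀ + k) * d m (t₀ + k)
        ≤ -V * φs (t₀ + k) + ∑ m, W m (t₀ + k) * (As m (t₀ + k) - xs m (t₀ + k)) :=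
      hmin (t₀ + k)
    have hfreeze : ∑ m, W m (t₀ + k) * (As m (t₀ + k) - xs m (t₀ + k))
        ≤ ∑ m, W m t₀ * (As m (t₀ + k) - xs m (t₀ + k)) + (k : ℝ) * S := by
      have hsplit : ∑ m, W m (t₀ + k) * (As m (t₀ + k) - xs m (t₀ + k))
          - ∑ m, W m t₀ * (As m (t₀ + k) - xs m (t₀ + k))
          = ∑ m, (W m (t₀ + k) - W m t₀) * (As m (t₀ + k) - xs m (t₀ + k)) := by
        rw [← Finset.sum_sub_distrib]
        exact Finset.sum_congr rfl fun m _ => by ring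
      have hb : ∑ m, (W m (t₀ + k) - W m t₀) * (As m (t₀ + k) - xs m (t₀ + k))
          ≤ (k : ℝ) * S := by
        calc ∑ m, (W m (t₀ + k) - W m t₀) * (As m (t₀ + k) - xs m (t₀ + k))
            ≤ ∑ m, (k : ℝ) * c m * c m := by
              refine Finset.sum_le_sum fun m _ => ?_
              calc (W m (t₀ + k) - W m t₀) * (As m (t₀ + k) - xs m (t₀ + k))
                  ≤ |W m (t₀ + k) - W m t₀| * |As m (t₀ + k) - xs m (t₀ + k)| := by
                    rw [← abs_mul]; exact le_abs_self _
                _ ≤ (k : ℝ) * c m * c m :=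
                    mul_le_mul (hdev m k) (hcomp m (t₀ + k)) (abs_nonneg _)
                      (mul_nonneg (Nat.cast_nonneg k) (hc0 m))
          _ = (k : ℝ) * S := by
              rw [hScsq, Finset.mul_sum]
              exact Finset.sum_congr rfl fun m _ => by ring
      linarith
    linarith [hid, hd2, hmink, hfreeze]
  -- sum up
  have hIco : ∀ f : ℕ → ℝ, ∑ τ ∈ Finset.Ico t₀ (t₀ + T), f τ
      = ∑ i ∈ Finset.range T, f (t₀ + i) := by
    intro f
    rw [Finset.sum_Ico_eq_sum_range]
    simp
  have htel : (1 / 2 : ℝ) * ∑ m, W m (t₀ + T) ^ 2 - (1 / 2) * ∑ m, W m t₀ ^ 2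
      = ∑ i ∈ Finset.range T,
          ((1 / 2 : ℝ) * ∑ m, W m (t₀ + (i + 1)) ^ 2 - (1 / 2) * ∑ m, W m (t₀ + i) ^ 2) := by
    have h := Finset.sum_range_sub (fun i => (1 / 2 : ℝ) * ∑ m, W m (t₀ + i) ^ 2) T
    simpa using h.symm
  have gauss : ∀ n : ℕ, ∑ i ∈ Finset.range n, ((1 / 2 : ℝ) + (i : ℝ)) = (n : ℝ) ^ 2 / 2 := by
    intro n
    induction n with
    | zero => simp
    | succ n ih =>
        rw [Finset.sum_range_succ, ih]
        push_cast; ring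
  have hR : ∑ i ∈ Finset.range T,
      ((1 / 2 : ℝ) * S + (i : ℝ) * S - V * φs (t₀ + i)
        + ∑ m, W m t₀ * (As m (t₀ + i) - xs m (t₀ + i)))
      = (T : ℝ) ^ 2 * ((1 / 2) * S) - V * ∑ i ∈ Finset.range T, φs (t₀ + i)
        + ∑ m, W m t₀ * ∑ τ ∈ Finset.Ico t₀ (t₀ + T), (As m τ - xs m τ) := by
    have h1 : ∑ i ∈ Finset.range T, ((1 / 2 : ℝ) * S + (i : ℝ) * S)
        = (T : ℝ) ^ 2 * ((1 / 2) * S) := by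
      have he : ∀ i : ℕ, (1 / 2 : ℝ) * S + (i : ℝ) * S = ((1 / 2 : ℝ) + (i : ℝ)) * S :=
        fun i => by ring
      simp only [he, ← Finset.sum_mul, gauss T]
      ring
    have h2 : ∑ i ∈ Finset.range T, ∑ m, W m t₀ * (As m (t₀ + i) - xs m (t₀ + i))
        = ∑ m, W m t₀ * ∑ τ ∈ Finset.Ico t₀ (t₀ + T), (As m τ - xs m τ) := by
      rw [Finset.sum_comm]
      refine Finset.sum_congr rfl fun m _ => ?_
      rw [hIco (fun τ => As m τ - xs m τ), Finset.mul_sum]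
    calc ∑ i ∈ Finset.range T,
        ((1 / 2 : ℝ) * S + (i : ℝ) * S - V * φs (t₀ + i)
          + ∑ m, W m t₀ * (As m (t₀ + i) - xs m (t₀ + i)))
        = ∑ i ∈ Finset.range T, ((1 / 2 : ℝ) * S + (i : ℝ) * S)
          - ∑ i ∈ Finset.range T, V * φs (t₀ + i)
          + ∑ i ∈ Finset.range T, ∑ m, W m t₀ * (As m (t₀ + i) - xs m (t₀ + i)) := by
          rw [Finset.sum_add_distrib, Finset.sum_sub_distrib]
      _ = _ := by rw [h1, h2, Finset.mul_sum (Finset.range T) (fun i => φs (t₀ + i)) V]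
  rw [hIco φ, hIco φs]
  show (1 / 2 : ℝ) * ∑ m, W m (t₀ + T) ^ 2 - (1 / 2) * ∑ m, W m t₀ ^ 2
      - V * ∑ i ∈ Finset.range T, φ (t₀ + i)
    ≤ (T : ℝ) ^ 2 * ((1 / 2) * S) - V * ∑ i ∈ Finset.range T, φs (t₀ + i)
      + ∑ m, W m t₀ * ∑ τ ∈ Finset.Ico t₀ (t₀ + T), (As m τ - xs m τ)
  calc (1 / 2 : ℝ) * ∑ m, W m (t₀ + T) ^ 2 - (1 / 2) * ∑ m, W m t₀ ^ 2
        - V * ∑ i ∈ Finset.range T, φ (t₀ + i)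
      = ∑ i ∈ Finset.range T,
          ((1 / 2 : ℝ) * ∑ m, W m (t₀ + (i + 1)) ^ 2 - (1 / 2) * ∑ m, W m (t₀ + i) ^ 2
            - V * φ (t₀ + i)) := by
        rw [htel, Finset.mul_sum, ← Finset.sum_sub_distrib]
    _ ≤ ∑ i ∈ Finset.range T,
          ((1 / 2 : ℝ) * S + (i : ℝ) * S - V * φs (t₀ + i)
            + ∑ m, W m t₀ * (As m (t₀ + i) - xs m (t₀ + i))) :=
        Finset.sum_le_sum fun i _ => hslot i
    _ = _ := hR
end
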